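/- arXiv:1207.2836 — 2 statements merged into one kernel-verified Lean document; each statement's English description precedes it below -/
import Mathlib

section
/- Let T : X ⇉ X* be a maximal monotone operator. The following are equivalent: (1) D(T) is bounded; (2) for every h ∈ F_T, P₁(D(h)) is bounded; (3) there exists h ∈ F_T such that P₁(D(h)) is bounded; (4) there exists 0 ≤ L < ∞ such that for every h ∈ F_T which is lower semicontinuous for the strong×weak-* topology on X × X* and every x ∈ P₁(D(h)), the function x* ↦ h(x,x*) is real-valued and |h(x,x*) − h(x,z*)| ≤ L‖x* − z*‖ for all x*, z* ∈ X*; (5) there exist h ∈ F_T lower semicontinuous for the strong×weak-* topology and 0 ≤ L < ∞ such that for every x ∈ P₁(D(h)), the function x* ↦ h(x,x*) is real-valued and |h(x,x*) − h(x,z*)| ≤ L‖x* − z*‖ for all x*, z* ∈ X*. -/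
open NormedSpace Classical

noncomputable section

/-- effective domain of an extended-real-valued function -/
def edom {E : Type*} (f : E → EReal) : Set E := {x | f x < ⊤}

/-- indicator function (0 on the set, +∞ off it) -/
def indic {E : Type*} (C : Set E) : E → EReal := fun x => if x ∈ C then 0 else ⊤

/-- convexity for EReal-valued functions -/
def ErConvex {E : Type*} [AddCommGroup E] [Module ℝ E] (f : E → EReal) : Prop :=
  ∀ x y : E, ∀ a b : ℝ, 0 ≤ a → 0 ≤ b → a + b = 1 →
    f (a • x + b • y) ≤ (a : EReal) * f x + (b : EReal) * f y

/-- recession cone of a set -/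
def recc {E : Type*} [AddCommGroup E] [Module ℝ E] (C : Set E) : Set E :=
  {u | ∀ z ∈ C, ∀ t : ℝ, 0 ≤ t → z + t • u ∈ C}

variable (X : Type*) [NormedAddCommGroup X] [NormedSpace ℝ X]

/-- Fenchel conjugate of f : X → EReal, defined on the dual -/
def conj1 (f : X → EReal) : StrongDual ℝ X → EReal :=
  fun p => ⨆ x : X, ((p x : EReal) - f x)

/-- Fenchel conjugate of h : X × X* → EReal, defined on X* × X** via
⟨(x,x*),(y*,y**)⟩ = ⟨x,y*⟩ + ⟨y**,x*⟩ -/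
def conj2 (h : X × StrongDual ℝ X → EReal) : StrongDual ℝ X × StrongDual ℝ (StrongDual ℝ X) → EReal :=
  fun p => ⨆ z : X × StrongDual ℝ X, (((p.1 z.1 + p.2 z.2 : ℝ) : EReal) - h z)

/-- The J operation: (Jh)(x,x*) = h*(x*, x), with X canonically embedded in X** -/
def Jop (h : X × StrongDual ℝ X → EReal) : X × StrongDual ℝ X → EReal :=
  fun z => conj2 X h (z.2, inclusionInDoubleDual ℝ X z.1)

/-- the duality product as an EReal-valued function on X × X* -/
def pairE : X × StrongDual ℝ X → EReal := fun z => ((z.2 z.1 : ℝ) : EReal)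

/-- weak-* closure of a subset of the dual -/
def wcl (S : Set (StrongDual ℝ X)) : Set (StrongDual ℝ X) :=
  StrongDual.toWeakDual ⁻¹' closure (StrongDual.toWeakDual '' S)

/-- monotone subset of X × X* -/
def MonotoneSet (T : Set (X × StrongDual ℝ X)) : Prop :=
  ∀ p ∈ T, ∀ q ∈ T, 0 ≤ (p.2 - q.2) (p.1 - q.1)

/-- maximal monotone subset of X × X* -/
def MaxMonotone (T : Set (X × StrongDual ℝ X)) : Prop :=
  MonotoneSet X T ∧ ∀ S : Set (X × StrongDual ℝ X), MonotoneSet X S → T ⊆ S → S = T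

/-- the Fitzpatrick family of a maximal monotone operator: closed convex functions
majorizing the duality product and coinciding with it on T -/
def FitzFamily (T : Set (X × StrongDual ℝ X)) : Set ((X × StrongDual ℝ X) → EReal) :=
  {h | ErConvex h ∧ LowerSemicontinuous h ∧ (∀ z, pairE X z ≤ h z) ∧
       ∀ z ∈ T, h z = pairE X z}

/-- lower semicontinuity with respect to the strong × weak-* topology on X × X* -/
def lscSW (h : X × StrongDual ℝ X → EReal) : Prop :=
  LowerSemicontinuous (fun p : X × WeakDual ℝ X => h (p.1, StrongDual.toWeakDual.symm p.2))

end


noncomputable section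
variable {X : Type*} [NormedAddCommGroup X] [NormedSpace ℝ X]


lemma coe_mul_le_of_le {a s : ℝ} {G : EReal} (ha : 0 ≤ a) (hs : (s : EReal) ≤ G) :
    ((a * s : ℝ) : EReal) ≤ (a : EReal) * G := by
  rcases eq_or_lt_of_le ha with ha0 | hapos
  · rw [← ha0]; simp [EReal.zero_mul]
  induction G with
  | bot => exact absurd hs (by simp)
  | coe g =>
    rw [← EReal.coe_mul, EReal.coe_le_coe_iff]
    exact mul_le_mul_of_nonneg_left (EReal.coe_le_coe_iff.mp hs) ha
  | top =>
    rw [EReal.coe_mul_top_of_pos hapos]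
    exact le_top

/-- Fitzpatrick function of T -/
def phiT (T : Set (X × StrongDual ℝ X)) : X × StrongDual ℝ X → EReal :=
  fun z => ⨆ p : T, (((p : X × StrongDual ℝ X).2 z.1 + z.2 (p : X × StrongDual ℝ X).1
    - (p : X × StrongDual ℝ X).2 (p : X × StrongDual ℝ X).1 : ℝ) : EReal)

lemma phiT_convex (T : Set (X × StrongDual ℝ X)) : ErConvex (phiT T) := by
  intro x y a b ha hb hab
  apply iSup_le
  intro p
  have key : ((p : X × StrongDual ℝ X).2 (a • x + b • y).1 + (a • x + b • y).2 (p : X × StrongDual ℝ X).1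
      - (p : X × StrongDual ℝ X).2 (p : X × StrongDual ℝ X).1 : ℝ)
      = a * ((p : X × StrongDual ℝ X).2 x.1 + x.2 (p : X × StrongDual ℝ X).1
          - (p : X × StrongDual ℝ X).2 (p : X × StrongDual ℝ X).1)
      + b * ((p : X × StrongDual ℝ X).2 y.1 + y.2 (p : X × StrongDual ℝ X).1
          - (p : X × StrongDual ℝ X).2 (p : X × StrongDual ℝ X).1) := by
    simp only [Prod.fst_add, Prod.snd_add, Prod.smul_fst, Prod.smul_snd, map_add, map_smul,
      ContinuousLinearMap.add_apply, ContinuousLinearMap.smul_apply, smul_eq_mul]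
    linear_combination ((p : X × StrongDual ℝ X).2 (p : X × StrongDual ℝ X).1) * hab
  rw [key, EReal.coe_add]
  have h1 : (((p : X × StrongDual ℝ X).2 x.1 + x.2 (p : X × StrongDual ℝ X).1
      - (p : X × StrongDual ℝ X).2 (p : X × StrongDual ℝ X).1 : ℝ) : EReal) ≤ phiT T x :=
    le_iSup (fun p : T => (((p : X × StrongDual ℝ X).2 x.1 + x.2 (p : X × StrongDual ℝ X).1
      - (p : X × StrongDual ℝ X).2 (p : X × StrongDual ℝ X).1 : ℝ) : EReal)) p
  have h2 : (((p : X × StrongDual ℝ X).2 y.1 + y.2 (p : X × StrongDual ℝ X).1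
      - (p : X × StrongDual ℝ X).2 (p : X × StrongDual ℝ X).1 : ℝ) : EReal) ≤ phiT T y :=
    le_iSup (fun p : T => (((p : X × StrongDual ℝ X).2 y.1 + y.2 (p : X × StrongDual ℝ X).1
      - (p : X × StrongDual ℝ X).2 (p : X × StrongDual ℝ X).1 : ℝ) : EReal)) p
  exact add_le_add (coe_mul_le_of_le ha h1) (coe_mul_le_of_le hb h2)

lemma phiT_eq_pair_on {T : Set (X × StrongDual ℝ X)} (hmono : MonotoneSet X T)
    {z : X × StrongDual ℝ X} (hz : z ∈ T) : phiT T z = pairE X z := by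
  apply le_antisymm
  · apply iSup_le
    intro p
    have := hmono p p.2 z hz
    simp only [ContinuousLinearMap.sub_apply, map_sub] at this
    unfold pairE
    rw [EReal.coe_le_coe_iff]
    linarith
  · exact le_trans (le_of_eq (by
      unfold pairE
      norm_num)) (le_iSup (fun p : T => (((p : X × StrongDual ℝ X).2 z.1 + z.2 (p : X × StrongDual ℝ X).1
        - (p : X × StrongDual ℝ X).2 (p : X × StrongDual ℝ X).1 : ℝ) : EReal)) ⟨z, hz⟩)

lemma phiT_ge_pair {T : Set (X × StrongDual ℝ X)} (hT : MaxMonotone X T) (z : X × StrongDual ℝ X) :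
    pairE X z ≤ phiT T z := by
  by_cases hz : z ∈ T
  · exact le_of_eq (phiT_eq_pair_on hT.1 hz).symm
  · have hnot : ¬ MonotoneSet X (insert z T) := by
      intro hm
      have := hT.2 _ hm (Set.subset_insert _ _)
      exact hz (this ▸ Set.mem_insert z T)
    unfold MonotoneSet at hnot
    push_neg at hnot
    obtain ⟨p, hp, q, hq, hlt⟩ := hnot
    rcases Set.mem_insert_iff.mp hp with hp1 | hp2 <;>
      rcases Set.mem_insert_iff.mp hq with hq1 | hq2
    · exfalso; rw [hp1, hq1] at hlt; simp at hlt
    · -- p = z, q ∈ T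
      refine le_trans ?_ (le_iSup _ (⟨q, hq2⟩ : T))
      unfold pairE
      rw [EReal.coe_le_coe_iff]
      rw [hp1] at hlt
      simp only [ContinuousLinearMap.sub_apply, map_sub] at hlt
      linarith
    · -- q = z, p ∈ T
      refine le_trans ?_ (le_iSup _ (⟨p, hp2⟩ : T))
      unfold pairE
      rw [EReal.coe_le_coe_iff]
      rw [hq1] at hlt
      simp only [ContinuousLinearMap.sub_apply, map_sub] at hlt
      linarith
    · exact absurd hlt (not_lt.mpr (hT.1 p hp2 q hq2))

lemma phiT_lsc (T : Set (X × StrongDual ℝ X)) : LowerSemicontinuous (phiT T) := by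
  apply lowerSemicontinuous_iSup
  intro p
  have hc : Continuous (fun z : X × StrongDual ℝ X => ((p : X × StrongDual ℝ X).2 z.1
      + z.2 (p : X × StrongDual ℝ X).1 - (p : X × StrongDual ℝ X).2 (p : X × StrongDual ℝ X).1 : ℝ)) := by
    apply Continuous.sub
    · apply Continuous.add
      · exact (p : X × StrongDual ℝ X).2.continuous.comp continuous_fst
      · exact ((ContinuousLinearMap.apply ℝ ℝ ((p : X × StrongDual ℝ X).1)).continuous).comp
          continuous_snd
    · exact continuous_const
  exact (continuous_coe_real_ereal.comp hc).lowerSemicontinuous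

lemma phiT_lscSW (T : Set (X × StrongDual ℝ X)) : lscSW X (phiT T) := by
  unfold lscSW
  have : (fun q : X × WeakDual ℝ X => phiT T (q.1, StrongDual.toWeakDual.symm q.2))
      = fun q : X × WeakDual ℝ X => ⨆ p : T, (((p : X × StrongDual ℝ X).2 q.1
        + q.2 (p : X × StrongDual ℝ X).1
        - (p : X × StrongDual ℝ X).2 (p : X × StrongDual ℝ X).1 : ℝ) : EReal) := rfl
  rw [this]
  apply lowerSemicontinuous_iSup
  intro p
  have hc : Continuous (fun q : X × WeakDual ℝ X => ((p : X × StrongDual ℝ X).2 q.1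
      + q.2 (p : X × StrongDual ℝ X).1 - (p : X × StrongDual ℝ X).2 (p : X × StrongDual ℝ X).1 : ℝ)) := by
    apply Continuous.sub
    · apply Continuous.add
      · exact (p : X × StrongDual ℝ X).2.continuous.comp continuous_fst
      · exact (WeakBilin.eval_continuous _ ((p : X × StrongDual ℝ X).1)).comp continuous_snd
    · exact continuous_const
  exact (continuous_coe_real_ereal.comp hc).lowerSemicontinuous

lemma phiT_mem_FitzFamily {T : Set (X × StrongDual ℝ X)} (hT : MaxMonotone X T) :
    phiT T ∈ FitzFamily X T :=
  ⟨phiT_convex T, phiT_lsc T, phiT_ge_pair hT, fun _ hz => phiT_eq_pair_on hT.1 hz⟩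
lemma norm_le_of_affine_bound {T : Set (X × StrongDual ℝ X)} (hT : MaxMonotone X T) {L : ℝ}
    (hL : 0 ≤ L) (hD : ∀ p ∈ T, ‖p.1‖ ≤ L) (v : X) (v' : StrongDual ℝ X) (c : ℝ)
    (hb : ∀ p ∈ T, v' p.1 + p.2 v - p.2 p.1 ≤ c) : ‖v‖ ≤ L := by
  by_contra hgt
  push_neg at hgt
  have hv0 : v ≠ 0 := by
    intro h; rw [h, norm_zero] at hgt; linarith
  obtain ⟨z, hz1, hzv⟩ := exists_dual_vector ℝ v (norm_ne_zero_iff.mpr hv0)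
  have hzv' : z v = ‖v‖ := by exact_mod_cast hzv
  set lam : ℝ := max 0 ((c - v' v) / (‖v‖ - L)) with hlam
  have hlam0 : 0 ≤ lam := le_max_left _ _
  have hlamge : c - v' v ≤ lam * (‖v‖ - L) := by
    have hpos : 0 < ‖v‖ - L := by linarith
    have : (c - v' v) / (‖v‖ - L) ≤ lam := le_max_right _ _
    calc c - v' v = ((c - v' v) / (‖v‖ - L)) * (‖v‖ - L) := by field_simp
    _ ≤ lam * (‖v‖ - L) := by nlinarith
  set w : StrongDual ℝ X := v' + lam • z with hw
  have key : ∀ q ∈ T, 0 ≤ (w - q.2) (v - q.1) := by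
    intro q hq
    have h1 : q.2 v - q.2 q.1 ≤ c - v' q.1 := by have := hb q hq; linarith
    have h2 : z q.1 ≤ L := by
      calc z q.1 ≤ ‖z‖ * ‖q.1‖ := le_trans (le_abs_self _) (by
        rw [← Real.norm_eq_abs]; exact z.le_opNorm q.1)
      _ ≤ 1 * L := by
        apply mul_le_mul (le_of_eq hz1) (hD q hq) (norm_nonneg _) zero_le_one
      _ = L := one_mul L
    have expand : (w - q.2) (v - q.1)
        = v' v - v' q.1 + lam * (z v - z q.1) - (q.2 v - q.2 q.1) := by
      simp only [hw, ContinuousLinearMap.sub_apply, ContinuousLinearMap.add_apply,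
        ContinuousLinearMap.smul_apply, map_sub, smul_eq_mul]
      ring
    rw [expand]
    have h3 : lam * (‖v‖ - L) ≤ lam * (z v - z q.1) := by
      apply mul_le_mul_of_nonneg_left _ hlam0
      rw [hzv']; linarith
    linarith
  have hmonoS : MonotoneSet X (insert (v, w) T) := by
    intro p hp q hq
    rcases Set.mem_insert_iff.mp hp with hp1 | hp2 <;>
      rcases Set.mem_insert_iff.mp hq with hq1 | hq2
    · rw [hp1, hq1]; simp
    · rw [hp1]; exact key q hq2
    · rw [hq1]
      have : (p.2 - w) (p.1 - v) = (w - p.2) (v - p.1) := by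
        simp only [ContinuousLinearMap.sub_apply, map_sub]
        ring
      rw [this]; exact key p hp2
    · exact hT.1 p hp2 q hq2
  have hST := hT.2 _ hmonoS (Set.subset_insert _ _)
  have hmem : (v, w) ∈ T := by rw [← hST]; exact Set.mem_insert _ _
  have := hD _ hmem
  simp only at this
  linarith


lemma fitz_term_bound {T : Set (X × StrongDual ℝ X)} {h : X × StrongDual ℝ X → EReal}
    (hh : h ∈ FitzFamily X T) {x : X} {xs : StrongDual ℝ X} (hfin : h (x, xs) < ⊤) :
    ∀ p ∈ T, xs p.1 + p.2 x - p.2 p.1 ≤ 2 * (h (x, xs)).toReal - xs x := by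
  obtain ⟨hconv, _, hpair, heqT⟩ := hh
  have hne_bot : h (x, xs) ≠ ⊥ :=
    ((lt_of_lt_of_le (EReal.bot_lt_coe _) (hpair (x, xs)))).ne'
  set r : ℝ := (h (x, xs)).toReal with hrdef
  have hr : h (x, xs) = (r : EReal) := (EReal.coe_toReal hfin.ne hne_bot).symm
  intro p hp
  have hcv := hconv p (x, xs) (1/2) (1/2) (by norm_num) (by norm_num) (by norm_num)
  rw [heqT p hp, hr] at hcv
  unfold pairE at hcv
  rw [← EReal.coe_mul, ← EReal.coe_mul, ← EReal.coe_add] at hcv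
  have hpl := hpair ((1/2 : ℝ) • p + (1/2 : ℝ) • (x, xs))
  unfold pairE at hpl
  have hle := le_trans hpl hcv
  rw [EReal.coe_le_coe_iff] at hle
  have hexp : (((1/2 : ℝ) • p + (1/2 : ℝ) • (x, xs)).2 (((1/2 : ℝ) • p
      + (1/2 : ℝ) • (x, xs)).1) : ℝ)
      = (1/2 * (p.2 p.1) + 1/2 * (p.2 x) + 1/2 * (xs p.1) + 1/2 * (xs x)) / 2 := by
    simp only [Prod.fst_add, Prod.snd_add, Prod.smul_fst, Prod.smul_snd, map_add, map_smul,
      ContinuousLinearMap.add_apply, ContinuousLinearMap.smul_apply, smul_eq_mul]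
    ring
  rw [hexp] at hle
  linarith

lemma pair_lt_top (z : X × StrongDual ℝ X) : pairE X z < ⊤ := by
  unfold pairE
  exact EReal.coe_lt_top _


instance : LocallyConvexSpace ℝ (WeakDual ℝ X) :=
  WeakBilin.locallyConvexSpace (𝕜 := ℝ) (B := topDualPairing ℝ X)

lemma mul_le_coe_of_le {a t : ℝ} {x : EReal} (ha : 0 ≤ a) (hx : x ≤ (t : EReal)) :
    (a : EReal) * x ≤ ((a * t : ℝ) : EReal) := by
  rcases eq_or_lt_of_le ha with ha0 | hapos
  · rw [← ha0]; simp [EReal.zero_mul]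
  induction x with
  | bot => rw [EReal.coe_mul_bot_of_pos hapos]; exact bot_le
  | coe g =>
    rw [← EReal.coe_mul, EReal.coe_le_coe_iff]
    exact mul_le_mul_of_nonneg_left (EReal.coe_le_coe_iff.mp hx) ha
  | top => exact absurd hx (by simp)

def evalL (x : X) : StrongDual ℝ X →ₗ[ℝ] ℝ where
  toFun y := y x
  map_add' := by intros; simp
  map_smul' := by intros; simp

lemma weakdual_dual_eval (g : WeakDual ℝ X →L[ℝ] ℝ) :
    ∃ v : X, ∀ y : WeakDual ℝ X, g y = y v := by
  have hcont : Continuous g := g.continuous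
  have hmem : (g ⁻¹' Metric.ball (0:ℝ) 1) ∈ nhds (0 : WeakDual ℝ X) := by
    have : Metric.ball (0:ℝ) 1 ∈ nhds (g 0) := by
      simp [Metric.ball_mem_nhds]
    exact hcont.continuousAt.preimage_mem_nhds this
  rw [show nhds (0 : WeakDual ℝ X) = Filter.comap (fun (x : WeakDual ℝ X) (y : X) => (topDualPairing ℝ X) x y)
      (nhds (fun y : X => (topDualPairing ℝ X) 0 y)) from nhds_induced _ _] at hmem
  obtain ⟨t, ht, hsub⟩ := Filter.mem_comap.mp hmem
  have h0 : (fun y : X => ((topDualPairing ℝ X) 0) y) = (fun _ : X => (0:ℝ)) := by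
    ext x; simp
  rw [h0, nhds_pi] at ht
  obtain ⟨I, hIfin, V, hV, hVsub⟩ := Filter.mem_pi.mp ht
  have hker : ∀ y : WeakDual ℝ X, (∀ x ∈ I, y x = 0) → g y = 0 := by
    intro y hy
    by_contra hne
    obtain ⟨c, hc⟩ : ∃ c : ℝ, 1 < |g (c • y)| := by
      refine ⟨2 / |g y|, ?_⟩
      have : |g y| > 0 := abs_pos.mpr hne
      rw [map_smul]
      rw [smul_eq_mul, abs_mul, abs_div]
      rw [abs_two, abs_abs, div_mul_cancel₀]
      · norm_num
      · exact ne_of_gt this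
    have hmemI : (fun x : X => ((topDualPairing ℝ X) (c • y)) x) ∈ I.pi V := by
      intro x hx
      have h2 : ((topDualPairing ℝ X) (c • y)) x = 0 := by
        have := hy x hx
        change c * ((topDualPairing ℝ X) y) x = 0
        have : ((topDualPairing ℝ X) y) x = y x := rfl
        rw [this, hy x hx, mul_zero]
      show ((topDualPairing ℝ X) (c • y)) x ∈ V x
      rw [h2]
      exact mem_of_mem_nhds (hV x)
    have := hsub (hVsub hmemI)
    simp only [Set.mem_preimage, Metric.mem_ball, dist_zero_right, Real.norm_eq_abs] at this
    linarith
  haveI : Finite ↥I := hIfin.to_subtype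
  have hker' : ⨅ i : ↥I, LinearMap.ker (evalL (i : X) : StrongDual ℝ X →ₗ[ℝ] ℝ) ≤
      LinearMap.ker (g.toLinearMap : WeakDual ℝ X →ₗ[ℝ] ℝ) := by
    intro y hy
    simp only [Submodule.mem_iInf, LinearMap.mem_ker] at hy ⊢
    exact hker y (fun x hx => hy ⟨x, hx⟩)
  have hspan := mem_span_of_iInf_ker_le_ker (𝕜 := ℝ) (E := WeakDual ℝ X)
    (L := fun i : ↥I => evalL (i : X)) (K := g.toLinearMap) hker'
  haveI : Fintype ↥I := hIfin.fintype
  obtain ⟨cf, hcf⟩ := (Submodule.mem_span_range_iff_exists_fun ℝ (M := StrongDual ℝ X →ₗ[ℝ] ℝ)).mp hspan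
  refine ⟨∑ i : ↥I, cf i • (i : X), fun y => ?_⟩
  have := LinearMap.congr_fun hcf y
  change (∑ i, cf i • evalL (i : X)) (StrongDual.toWeakDual.symm y) = _ at this
  rw [LinearMap.sum_apply] at this
  simp only [Finset.sum_apply, LinearMap.smul_apply] at this
  have hgy : g y = ∑ x : ↥I, cf x • (evalL (x : X)) y := this.symm
  rw [hgy, map_sum]
  refine Finset.sum_congr rfl fun i _ => ?_
  simp [evalL, smul_eq_mul]
  exact Or.inl rfl

lemma decompose_functional (f : ((X × WeakDual ℝ X) × ℝ) →L[ℝ] ℝ) :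
    ∃ (g₁ : StrongDual ℝ X) (v : X) (s : ℝ), ∀ p : (X × WeakDual ℝ X) × ℝ,
      f p = g₁ p.1.1 + p.1.2 v + p.2 * s := by
  set gE : (X × WeakDual ℝ X) →L[ℝ] ℝ :=
    f.comp (ContinuousLinearMap.inl ℝ (X × WeakDual ℝ X) ℝ) with hgE
  set g₁ : StrongDual ℝ X := gE.comp (ContinuousLinearMap.inl ℝ X (WeakDual ℝ X)) with hg₁
  set g₂ : WeakDual ℝ X →L[ℝ] ℝ :=
    gE.comp (ContinuousLinearMap.inr ℝ X (WeakDual ℝ X)) with hg₂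
  obtain ⟨v, hv⟩ := weakdual_dual_eval g₂
  refine ⟨g₁, v, f ((0, 0), 1), fun p => ?_⟩
  have hp : p = (((p.1.1, 0), 0) : (X × WeakDual ℝ X) × ℝ) + ((0, p.1.2), 0)
      + p.2 • ((0, 0), 1) := by
    ext <;> simp
  rw [hp, map_add, map_add, map_smul]
  have e1 : f (((p.1.1, 0), 0) : (X × WeakDual ℝ X) × ℝ) = g₁ p.1.1 := rfl
  have e2 : f ((((0 : X), p.1.2), 0) : (X × WeakDual ℝ X) × ℝ) = g₂ p.1.2 := rfl
  rw [e1, e2, hv p.1.2]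
  simp [smul_eq_mul]

set_option maxHeartbeats 1000000 in
lemma lipschitz_of_affine_slopes {h : X × StrongDual ℝ X → EReal} (hconv : ErConvex h)
    (hlsc : lscSW X h) (hpair : ∀ z, pairE X z ≤ h z) {L : ℝ} (hLnn : 0 ≤ L)
    (hL : ∀ (v' : StrongDual ℝ X) (v : X) (c : ℝ),
      (∀ z : X × StrongDual ℝ X, ((v' z.1 + z.2 v - c : ℝ) : EReal) ≤ h z) → ‖v‖ ≤ L)
    {x : X} {z₀ : StrongDual ℝ X} (hz₀ : h (x, z₀) < ⊤) (y : StrongDual ℝ X) :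
    h (x, y) ≤ (((h (x, z₀)).toReal + L * ‖y - z₀‖ : ℝ) : EReal) := by
  classical
  set W := (StrongDual.toWeakDual : StrongDual ℝ X ≃ₗ[ℝ] WeakDual ℝ X) with hW
  set h' : X × WeakDual ℝ X → EReal := fun p => h (p.1, W.symm p.2) with hh'
  have hne_bot : ∀ z, h z ≠ ⊥ := fun z =>
    ((lt_of_lt_of_le (EReal.bot_lt_coe _) (hpair z))).ne'
  set m₀ : ℝ := (h (x, z₀)).toReal with hm₀
  have hz₀' : h (x, z₀) = (m₀ : EReal) := (EReal.coe_toReal hz₀.ne (hne_bot _)).symm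
  have hWs : ∀ (y' : StrongDual ℝ X), W.symm (W y') = y' := fun y' => W.symm_apply_apply y'
  have hh'W : ∀ (z : X × StrongDual ℝ X), h' (z.1, W z.2) = h z := by
    intro z; rw [hh']; simp only [hWs]
  set Epi : Set ((X × WeakDual ℝ X) × ℝ) := {q | h' q.1 ≤ (q.2 : EReal)} with hEpi
  -- closedness
  have hEpiCl : IsClosed Epi := by
    rw [← isOpen_compl_iff, isOpen_iff_mem_nhds]
    rintro ⟨p, t⟩ hq
    simp only [Set.mem_compl_iff, hEpi, Set.mem_setOf_eq, not_le] at hq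
    obtain ⟨r, hr1, hr2⟩ := EReal.exists_between_coe_real hq
    have h1 : {p' : X × WeakDual ℝ X | (r : EReal) < h' p'} ∈ nhds p := hlsc p _ hr2
    have h2 : Set.Iio r ∈ nhds t := Iio_mem_nhds (EReal.coe_lt_coe_iff.mp hr1)
    rw [nhds_prod_eq]
    apply Filter.mem_of_superset (Filter.prod_mem_prod h1 h2)
    rintro ⟨p', t'⟩ ⟨hp', ht'⟩
    simp only [Set.mem_setOf_eq] at hp'
    simp only [Set.mem_Iio] at ht'
    simp only [Set.mem_compl_iff, hEpi, Set.mem_setOf_eq, not_le]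
    exact lt_trans (EReal.coe_lt_coe_iff.mpr ht') hp'
  -- convexity
  have hEpiCv : Convex ℝ Epi := by
    rintro ⟨p, t⟩ hp ⟨p', t'⟩ hp' a b ha hb hab
    simp only [hEpi, Set.mem_setOf_eq] at hp hp' ⊢
    show h' ((a • (p, t) + b • ((p', t') : (X × WeakDual ℝ X) × ℝ)).1)
      ≤ (((a • (p, t) + b • ((p', t') : (X × WeakDual ℝ X) × ℝ)).2 : ℝ) : EReal)
    have e1 : (a • ((p, t) : (X × WeakDual ℝ X) × ℝ) + b • ((p', t'))).1
        = a • p + b • p' := rfl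
    have e2 : (a • ((p, t) : (X × WeakDual ℝ X) × ℝ) + b • ((p', t'))).2
        = a * t + b * t' := rfl
    rw [e1, e2]
    have e3 : h' (a • p + b • p')
        = h (a • (p.1, W.symm p.2) + b • (p'.1, W.symm p'.2)) := by
      show h ((a • p + b • p').1, W.symm ((a • p + b • p').2)) = _
      have h4 : ((a • p + b • p').1, W.symm ((a • p + b • p').2))
          = a • (p.1, W.symm p.2) + b • (p'.1, W.symm p'.2) := by
        have c1 : (a • p + b • p').1 = a • p.1 + b • p'.1 := rfl
        have c2 : W.symm ((a • p + b • p').2) = a • W.symm p.2 + b • W.symm p'.2 := by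
          show W.symm (a • p.2 + b • p'.2) = _
          rw [map_add, map_smul, map_smul]
        rw [Prod.ext_iff]
        exact ⟨c1, c2⟩
      rw [h4]
    rw [e3]
    calc h (a • (p.1, W.symm p.2) + b • (p'.1, W.symm p'.2))
        ≤ (a : EReal) * h (p.1, W.symm p.2) + (b : EReal) * h (p'.1, W.symm p'.2) :=
          hconv _ _ a b ha hb hab
      _ ≤ ((a * t : ℝ) : EReal) + ((b * t' : ℝ) : EReal) :=
          add_le_add (mul_le_coe_of_le ha hp) (mul_le_coe_of_le hb hp')
      _ = ((a * t + b * t' : ℝ) : EReal) := by rw [← EReal.coe_add]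
  -- first separation, at ((x, W z₀), m₀ - 1)
  have hq₀ : (((x, W z₀), m₀ - 1) : (X × WeakDual ℝ X) × ℝ) ∉ Epi := by
    simp only [hEpi, Set.mem_setOf_eq, not_le]
    rw [hh'W (x, z₀), hz₀']
    exact EReal.coe_lt_coe_iff.mpr (by linarith)
  obtain ⟨f, u, hfq₀, hfEpi⟩ := geometric_hahn_banach_point_closed hEpiCv hEpiCl hq₀
  obtain ⟨g₁, v, s, hfdec⟩ := decompose_functional f
  have hmem₀ : ∀ t : ℝ, m₀ ≤ t → (((x, W z₀), t) : (X × WeakDual ℝ X) × ℝ) ∈ Epi := by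
    intro t htt
    simp only [hEpi, Set.mem_setOf_eq]
    rw [hh'W (x, z₀), hz₀']
    exact EReal.coe_le_coe_iff.mpr htt
  have hs : 0 < s := by
    have h1 := hfEpi _ (hmem₀ m₀ (le_refl _))
    rw [hfdec] at h1 hfq₀
    simp only at h1 hfq₀
    nlinarith
  -- the basic affine minorant from the first separation
  have key : ∀ z : X × StrongDual ℝ X, (((u - g₁ z.1 - z.2 v) / s : ℝ) : EReal) ≤ h z := by
    intro z
    by_cases hz : h z = ⊤
    · rw [hz]; exact le_top
    · have hzr : h z = ((h z).toReal : EReal) := (EReal.coe_toReal hz (hne_bot z)).symm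
      have hzmem : (((z.1, W z.2), (h z).toReal) : (X × WeakDual ℝ X) × ℝ) ∈ Epi := by
        simp only [hEpi, Set.mem_setOf_eq]
        rw [hh'W z]
        exact le_of_eq hzr
      have := hfEpi _ hzmem
      rw [hfdec] at this
      simp only at this
      have hWzv : (W z.2) v = z.2 v := rfl
      rw [hWzv] at this
      have h5 : ((u - g₁ z.1 - z.2 v) / s : ℝ) ≤ (h z).toReal := by
        rw [div_le_iff₀ hs]
        linarith
      calc (((u - g₁ z.1 - z.2 v) / s : ℝ) : EReal) ≤ (((h z).toReal : ℝ) : EReal) :=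
            EReal.coe_le_coe_iff.mpr h5
        _ = h z := hzr.symm
  -- main argument: suppose the claimed bound fails
  by_contra hgt
  push_neg at hgt
  set M : ℝ := m₀ + L * ‖y - z₀‖ with hMdef
  have hgt' : (M : EReal) < h (x, y) := hgt
  have hq₁ : (((x, W y), M) : (X × WeakDual ℝ X) × ℝ) ∉ Epi := by
    simp only [hEpi, Set.mem_setOf_eq, not_le]
    rw [hh'W (x, y)]
    exact hgt'
  obtain ⟨f', u', hfq₁, hfEpi'⟩ := geometric_hahn_banach_point_closed hEpiCv hEpiCl hq₁
  obtain ⟨g₁', v'', s', hfdec'⟩ := decompose_functional f'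
  rw [hfdec'] at hfq₁
  simp only at hfq₁
  have hWy : (W y) v'' = y v'' := rfl
  rw [hWy] at hfq₁
  have hWz₀v : (W z₀) v'' = z₀ v'' := rfl
  have hs'nn : 0 ≤ s' := by
    by_contra hneg
    push_neg at hneg
    set t : ℝ := max m₀ ((u' - g₁' x - z₀ v'' - 1)/s') with htdef
    have h1 := hfEpi' _ (hmem₀ t (le_max_left _ _))
    rw [hfdec'] at h1
    simp only at h1
    rw [hWz₀v] at h1
    have h2 : t * s' ≤ u' - g₁' x - z₀ v'' - 1 := by
      have h3 := le_max_right m₀ ((u' - g₁' x - z₀ v'' - 1)/s')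
      have h5 : t * s' ≤ ((u' - g₁' x - z₀ v'' - 1)/s') * s' :=
        mul_le_mul_of_nonpos_right h3 (le_of_lt hneg)
      rwa [div_mul_cancel₀ _ (ne_of_lt hneg)] at h5
    linarith
  rcases eq_or_lt_of_le hs'nn with hs0 | hs'pos
  · -- case s' = 0
    have hs0' : s' = 0 := hs0.symm
    rw [hs0'] at hfq₁
    have hδ : 0 < u' - g₁' x - y v'' := by linarith
    have hdom : ∀ z : X × StrongDual ℝ X, h z ≠ ⊤ → u' < g₁' z.1 + z.2 v'' := by
      intro z hz
      set r : ℝ := (h z).toReal with hrdef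
      have hzr : h z = (r : EReal) := (EReal.coe_toReal hz (hne_bot z)).symm
      have hzmem : (((z.1, W z.2), r) : (X × WeakDual ℝ X) × ℝ) ∈ Epi := by
        simp only [hEpi, Set.mem_setOf_eq]
        rw [hh'W z]
        exact le_of_eq hzr
      have h1 := hfEpi' _ hzmem
      rw [hfdec'] at h1
      simp only at h1
      have hWzv : (W z.2) v'' = z.2 v'' := rfl
      rw [hWzv, hs0'] at h1
      linarith
    set δ : ℝ := u' - g₁' x - y v'' with hδdef
    set A0y : ℝ := (u - g₁ x - y v)/s with hA0ydef
    set k : ℝ := max 0 ((m₀ + L * ‖y - z₀‖ + 1 - A0y)/δ) with hkdef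
    have hk0 : 0 ≤ k := le_max_left _ _
    have keyk : ∀ z : X × StrongDual ℝ X,
        (((u - g₁ z.1 - z.2 v)/s + k * (u' - g₁' z.1 - z.2 v'') : ℝ) : EReal) ≤ h z := by
      intro z
      by_cases hz : h z = ⊤
      · rw [hz]; exact le_top
      · set r : ℝ := (h z).toReal with hrdef
        have hzr : h z = (r : EReal) := (EReal.coe_toReal hz (hne_bot z)).symm
        have h1 := key z
        rw [hzr] at h1 ⊢
        have h1' : (u - g₁ z.1 - z.2 v)/s ≤ r := EReal.coe_le_coe_iff.mp h1
        have h2 := hdom z hz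
        apply EReal.coe_le_coe_iff.mpr
        nlinarith
    set w : X := (-(1/s)) • v + (-k) • v'' with hwdef
    have hnormw : ‖w‖ ≤ L := by
      apply hL ((-(1/s)) • g₁ + (-k) • g₁') w (-(u/s) - k*u')
      intro z
      have heq : (((-(1/s)) • g₁ + (-k) • g₁') z.1 + z.2 w - (-(u/s) - k*u') : ℝ)
          = (u - g₁ z.1 - z.2 v)/s + k * (u' - g₁' z.1 - z.2 v'') := by
        simp only [hwdef, ContinuousLinearMap.add_apply, ContinuousLinearMap.smul_apply,
          map_add, map_smul, smul_eq_mul]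
        field_simp
        ring
      rw [heq]
      exact keyk z
    have hAz₀ : (u - g₁ x - z₀ v)/s + k * (u' - g₁' x - z₀ v'') ≤ m₀ := by
      have h1 := keyk (x, z₀)
      rw [hz₀'] at h1
      exact EReal.coe_le_coe_iff.mp h1
    have hwle : (y - z₀) w ≤ L * ‖y - z₀‖ := by
      calc (y - z₀) w ≤ ‖(y - z₀) w‖ := le_abs_self _
        _ ≤ ‖y - z₀‖ * ‖w‖ := (y - z₀).le_opNorm w
        _ ≤ ‖y - z₀‖ * L := mul_le_mul_of_nonneg_left hnormw (norm_nonneg _)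
        _ = L * ‖y - z₀‖ := mul_comm _ _
    have hdiff : A0y + k * δ
        = ((u - g₁ x - z₀ v)/s + k*(u' - g₁' x - z₀ v'')) + (y - z₀) w := by
      simp only [hA0ydef, hδdef, hwdef, map_add, map_smul, ContinuousLinearMap.sub_apply,
        smul_eq_mul]
      field_simp
      ring
    have hky : m₀ + L*‖y - z₀‖ + 1 ≤ A0y + k*δ := by
      have hratio : (m₀ + L * ‖y - z₀‖ + 1 - A0y)/δ ≤ k := le_max_right _ _
      have h4 : ((m₀ + L * ‖y - z₀‖ + 1 - A0y)/δ) * δ = m₀ + L * ‖y - z₀‖ + 1 - A0y := by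
        field_simp
      nlinarith
    have h9 : A0y + k * δ ≤ m₀ + L * ‖y - z₀‖ := by
      rw [hdiff]
      linarith
    linarith
  · -- case s' > 0
    have key' : ∀ z : X × StrongDual ℝ X, (((u' - g₁' z.1 - z.2 v'') / s' : ℝ) : EReal) ≤ h z := by
      intro z
      by_cases hz : h z = ⊤
      · rw [hz]; exact le_top
      · set r : ℝ := (h z).toReal with hrdef
        have hzr : h z = (r : EReal) := (EReal.coe_toReal hz (hne_bot z)).symm
        have hzmem : (((z.1, W z.2), r) : (X × WeakDual ℝ X) × ℝ) ∈ Epi := by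
          simp only [hEpi, Set.mem_setOf_eq]
          rw [hh'W z]
          exact le_of_eq hzr
        have h1 := hfEpi' _ hzmem
        rw [hfdec'] at h1
        simp only at h1
        have hWzv : (W z.2) v'' = z.2 v'' := rfl
        rw [hWzv] at h1
        rw [hzr]
        apply EReal.coe_le_coe_iff.mpr
        rw [div_le_iff₀ hs'pos]
        linarith
    have hnorm' : ‖(-(1/s')) • v''‖ ≤ L := by
      apply hL ((-(1/s')) • g₁') ((-(1/s')) • v'') (-(u'/s'))
      intro z
      have heq : (((-(1/s')) • g₁') z.1 + z.2 ((-(1/s')) • v'') - (-(u'/s')) : ℝ)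
          = (u' - g₁' z.1 - z.2 v'') / s' := by
        simp only [ContinuousLinearMap.smul_apply, map_smul, smul_eq_mul]
        field_simp
        ring
      rw [heq]
      exact key' z
    have hAz₀ : (u' - g₁' x - z₀ v'')/s' ≤ m₀ := by
      have h1 := key' (x, z₀)
      rw [hz₀'] at h1
      exact EReal.coe_le_coe_iff.mp h1
    have h7 : M < (u' - g₁' x - y v'')/s' := by
      rw [lt_div_iff₀ hs'pos]
      linarith
    have hwle' : (y - z₀) ((-(1/s')) • v'') ≤ L * ‖y - z₀‖ := by
      calc (y - z₀) ((-(1/s')) • v'') ≤ ‖(y - z₀) ((-(1/s')) • v'')‖ := le_abs_self _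
        _ ≤ ‖y - z₀‖ * ‖(-(1/s')) • v''‖ := (y - z₀).le_opNorm _
        _ ≤ ‖y - z₀‖ * L := mul_le_mul_of_nonneg_left hnorm' (norm_nonneg _)
        _ = L * ‖y - z₀‖ := mul_comm _ _
    have hdiff' : (u' - g₁' x - y v'')/s'
        = (u' - g₁' x - z₀ v'')/s' + (y - z₀) ((-(1/s')) • v'') := by
      simp only [map_smul, ContinuousLinearMap.sub_apply, smul_eq_mul]
      field_simp
      try ring
    rw [hdiff'] at h7
    rw [hMdef] at h7
    linarith

end

theorem statement15 (X : Type*) [NormedAddCommGroup X] [NormedSpace ℝ X] [CompleteSpace X]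
    (T : Set (X × StrongDual ℝ X)) (hT : MaxMonotone X T) :
    List.TFAE [
      Bornology.IsBounded (Prod.fst '' T),
      ∀ h ∈ FitzFamily X T, Bornology.IsBounded (Prod.fst '' edom h),
      ∃ h ∈ FitzFamily X T, Bornology.IsBounded (Prod.fst '' edom h),
      ∃ L : ℝ, 0 ≤ L ∧ ∀ h ∈ FitzFamily X T, lscSW X h → ∀ x ∈ Prod.fst '' edom h,
        (∀ y : StrongDual ℝ X, h (x, y) ≠ ⊤ ∧ h (x, y) ≠ ⊥) ∧
        ∀ y z : StrongDual ℝ X, |(h (x, y)).toReal - (h (x, z)).toReal| ≤ L * ‖y - z‖,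
      ∃ h ∈ FitzFamily X T, lscSW X h ∧ ∃ L : ℝ, 0 ≤ L ∧ ∀ x ∈ Prod.fst '' edom h,
        (∀ y : StrongDual ℝ X, h (x, y) ≠ ⊤ ∧ h (x, y) ≠ ⊥) ∧
        ∀ y z : StrongDual ℝ X, |(h (x, y)).toReal - (h (x, z)).toReal| ≤ L * ‖y - z‖ ] := by
  tfae_have 1 → 2 := by
    intro h1 h hh
    obtain ⟨C, hC⟩ := isBounded_iff_forall_norm_le.mp h1
    set L : ℝ := max C 0 with hLdef
    have hL0 : (0:ℝ) ≤ L := le_max_right _ _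
    have hD : ∀ p ∈ T, ‖p.1‖ ≤ L := fun p hp =>
      le_trans (hC _ ⟨p, hp, rfl⟩) (le_max_left _ _)
    rw [isBounded_iff_forall_norm_le]
    refine ⟨L, ?_⟩
    rintro x ⟨⟨x1, xs⟩, hz, rfl⟩
    have hfin : h (x1, xs) < ⊤ := hz
    exact norm_le_of_affine_bound hT hL0 hD x1 xs _ (fitz_term_bound hh hfin)
  tfae_have 2 → 3 := fun h2 =>
    ⟨phiT T, phiT_mem_FitzFamily hT, h2 _ (phiT_mem_FitzFamily hT)⟩
  tfae_have 3 → 1 := by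
    rintro ⟨h, hh, hb⟩
    apply hb.subset
    rintro x ⟨z, hz, rfl⟩
    refine ⟨z, ?_, rfl⟩
    show h z < ⊤
    rw [hh.2.2.2 z hz]
    exact pair_lt_top z
  tfae_have 1 → 4 := by
    intro h1
    obtain ⟨C, hC⟩ := isBounded_iff_forall_norm_le.mp h1
    set L : ℝ := max C 0 with hLdef
    have hL0 : (0:ℝ) ≤ L := le_max_right _ _
    have hD : ∀ p ∈ T, ‖p.1‖ ≤ L := fun p hp =>
      le_trans (hC _ ⟨p, hp, rfl⟩) (le_max_left _ _)
    refine ⟨L, hL0, ?_⟩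
    rintro h hh hlsc x ⟨⟨x1, xs⟩, hz, rfl⟩
    obtain ⟨hconv, _, hpair, heqT⟩ := hh
    have hLaff : ∀ (v' : StrongDual ℝ X) (v : X) (c : ℝ),
        (∀ z : X × StrongDual ℝ X, ((v' z.1 + z.2 v - c : ℝ) : EReal) ≤ h z) → ‖v‖ ≤ L := by
      intro v' v c hbz
      apply norm_le_of_affine_bound hT hL0 hD v v' c
      intro p hp
      have hbp := hbz p
      rw [heqT p hp] at hbp
      unfold pairE at hbp
      rw [EReal.coe_le_coe_iff] at hbp
      linarith
    have hfin0 : h (x1, xs) < ⊤ := hz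
    have hfin : ∀ y, h (x1, y) < ⊤ := fun y =>
      lt_of_le_of_lt (lipschitz_of_affine_slopes hconv hlsc hpair hL0 hLaff hfin0 y)
        (EReal.coe_lt_top _)
    have hnbot : ∀ y, h (x1, y) ≠ ⊥ := fun y =>
      (lt_of_lt_of_le (EReal.bot_lt_coe _) (hpair (x1, y))).ne'
    refine ⟨fun y => ⟨(hfin y).ne, hnbot y⟩, ?_⟩
    intro y z
    have hy := lipschitz_of_affine_slopes hconv hlsc hpair hL0 hLaff (hfin z) y
    have hz' := lipschitz_of_affine_slopes hconv hlsc hpair hL0 hLaff (hfin y) z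
    have hyr : h (x1, y) = ((h (x1, y)).toReal : EReal) :=
      (EReal.coe_toReal (hfin y).ne (hnbot y)).symm
    have hzr : h (x1, z) = ((h (x1, z)).toReal : EReal) :=
      (EReal.coe_toReal (hfin z).ne (hnbot z)).symm
    rw [hyr] at hy
    rw [hzr] at hz'
    have hy2 : (h (x1, y)).toReal ≤ (h (x1, z)).toReal + L * ‖y - z‖ :=
      EReal.coe_le_coe_iff.mp hy
    have hz2 : (h (x1, z)).toReal ≤ (h (x1, y)).toReal + L * ‖z - y‖ :=
      EReal.coe_le_coe_iff.mp hz'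
    rw [norm_sub_rev] at hz2
    rw [abs_le]
    constructor <;> linarith
  tfae_have 4 → 5 := by
    rintro ⟨L, hL0, h4⟩
    exact ⟨phiT T, phiT_mem_FitzFamily hT, phiT_lscSW T, L, hL0,
      h4 _ (phiT_mem_FitzFamily hT) (phiT_lscSW T)⟩
  tfae_have 5 → 1 := by
    rintro ⟨h, hh, hlsc, L, hL0, h5⟩
    obtain ⟨_, _, hpair, heqT⟩ := hh
    rw [isBounded_iff_forall_norm_le]
    refine ⟨L, ?_⟩
    rintro x ⟨⟨x1, xs⟩, hp, rfl⟩
    have hedom : (x1, xs) ∈ edom h := by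
      show h (x1, xs) < ⊤
      rw [heqT _ hp]
      exact pair_lt_top _
    obtain ⟨hfin, hlipx⟩ := h5 x1 ⟨(x1, xs), hedom, rfl⟩
    have hval : (h (x1, xs)).toReal = xs x1 := by
      rw [heqT _ hp]
      unfold pairE
      exact EReal.toReal_coe _
    have hbnd : ∀ g : StrongDual ℝ X, g x1 ≤ L * ‖g‖ := by
      intro g
      have h6 := hlipx (xs + g) xs
      have h8 : xs + g - xs = g := by abel
      rw [h8] at h6
      have h7 : (xs + g) x1 ≤ (h (x1, xs + g)).toReal := by
        have hpg := hpair (x1, xs + g)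
        unfold pairE at hpg
        have hcoe : h (x1, xs + g) = ((h (x1, xs + g)).toReal : EReal) :=
          (EReal.coe_toReal (hfin (xs + g)).1 (hfin (xs + g)).2).symm
        rw [hcoe] at hpg
        exact EReal.coe_le_coe_iff.mp hpg
      rw [hval] at h6
      have h9 : (h (x1, xs + g)).toReal - xs x1 ≤ L * ‖g‖ :=
        le_trans (le_abs_self _) h6
      have h10 : (xs + g) x1 = xs x1 + g x1 := by
        simp [ContinuousLinearMap.add_apply]
      linarith
    show ‖x1‖ ≤ L
    apply norm_le_dual_bound ℝ x1 hL0
    intro f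
    rw [Real.norm_eq_abs, abs_le]
    constructor
    · have := hbnd (-f)
      simp only [ContinuousLinearMap.neg_apply, norm_neg] at this
      linarith
    · exact hbnd f
  tfae_finish
end

section
/- If T : X ⇉ X* is a maximal monotone operator, then D(J δ_T) ⊆ {(x,x*) ∈ X × X* : ⟨x,x*⟩ ≤ 0}; that is, whenever the support function of T evaluated at (x*,x), namely sup_{(y,y*) ∈ T} (⟨y,x*⟩ + ⟨x,y*⟩), is finite, one has ⟨x,x*⟩ ≤ 0. -/
open NormedSpace Classical

theorem statement16 (X : Type*) [NormedAddCommGroup X] [NormedSpace ℝ X] [CompleteSpace X]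
    (T : Set (X × StrongDual ℝ X)) (hT : MaxMonotone X T) :
    edom (Jop X (indic T)) ⊆ {z : X × StrongDual ℝ X | z.2 z.1 ≤ 0} := by
  intro z hz
  simp only [Set.mem_setOf_eq]
  by_contra hpos
  push_neg at hpos
  set a : ℝ := z.2 z.1 with ha
  -- T is nonempty
  have hTne : T.Nonempty := by
    by_contra hne
    rw [Set.not_nonempty_iff_eq_empty] at hne
    have hmono : MonotoneSet X ({((0 : X), (0 : StrongDual ℝ X))} : Set (X × StrongDual ℝ X)) := by
      intro p hp q hq
      simp only [Set.mem_singleton_iff] at hp hq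
      subst hp; subst hq; simp
    have := hT.2 _ hmono (by rw [hne]; exact Set.empty_subset _)
    rw [hne] at this
    exact absurd this (by simp [Set.eq_empty_iff_forall_notMem])
  obtain ⟨⟨y0, y0s⟩, hy0⟩ := hTne
  -- extract a real bound M
  obtain ⟨M, hM', _⟩ := EReal.lt_iff_exists_real_btwn.mp hz
  have hM : ∀ p ∈ T, z.2 p.1 + p.2 z.1 ≤ M := by
    intro p hp
    have hle : ((z.2 p.1 + p.2 z.1 : ℝ) : EReal) ≤ Jop X (indic T) z := by
      have h1 := le_iSup
        (fun w : X × StrongDual ℝ X =>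
          (((z.2 w.1 + (inclusionInDoubleDual ℝ X z.1) w.2 : ℝ) : EReal) - indic T w)) p
      simpa [Jop, conj2, indic, hp, dual_def, sub_zero] using h1
    have := hle.trans hM'.le
    exact_mod_cast this
  set c : ℝ := z.2 y0 + y0s z.1 with hc
  set t : ℝ := max 1 ((M - c) / a) with htd
  have ht1 : (1 : ℝ) ≤ t := le_max_left _ _
  have hta : M - c ≤ t * a := by
    have := le_max_right 1 ((M - c) / a)
    calc M - c ≤ ((M - c) / a) * a := by rw [div_mul_cancel₀]; exact ne_of_gt hpos
    _ ≤ t * a := by apply mul_le_mul_of_nonneg_right (le_max_right _ _) hpos.le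
  set p' : X × StrongDual ℝ X := (y0 + t • z.1, y0s + t • z.2) with hp'
  -- the key inequality against any element of T
  have key : ∀ q ∈ T, 0 ≤ (p'.2 - q.2) (p'.1 - q.1) := by
    rintro ⟨y, ys⟩ hq
    have hmon := hT.1 (y0, y0s) hy0 (y, ys) hq
    have hb := hM (y, ys) hq
    simp only [ContinuousLinearMap.sub_apply, map_sub, map_add, map_smul,
      ContinuousLinearMap.add_apply, ContinuousLinearMap.smul_apply, smul_eq_mul, hp'] at hmon hb ⊢
    nlinarith [mul_le_mul_of_nonneg_left hb (by linarith : (0:ℝ) ≤ t),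
      mul_le_mul_of_nonneg_left hta (by linarith : (0:ℝ) ≤ t)]
  have hmono' : MonotoneSet X (insert p' T) := by
    intro p hp q hq
    rcases Set.mem_insert_iff.mp hp with hp | hp <;>
      rcases Set.mem_insert_iff.mp hq with hq | hq
    · subst hp; subst hq; simp
    · subst hp; exact key q hq
    · subst hq
      have := key p hp
      have hswap : (p'.2 - p.2) (p'.1 - p.1) = (p.2 - p'.2) (p.1 - p'.1) := by
        simp only [ContinuousLinearMap.sub_apply, map_sub]; ring
      linarith [hswap ▸ this]
    · exact hT.1 p hp q hq
  have heq := hT.2 _ hmono' (Set.subset_insert _ _)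
  have hp'T : p' ∈ T := heq ▸ Set.mem_insert _ _
  have hfin := hM p' hp'T
  simp only [hp', map_add, map_smul, ContinuousLinearMap.add_apply,
    ContinuousLinearMap.smul_apply, smul_eq_mul] at hfin
  nlinarith
end
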